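/- For all positive integers p, q and every natural number n with n ≥ p + q, the cardinality of S^{p/q}_n satisfies the linear recurrence |S^{p/q}_n| = Σ_{k=1}^{q} (-1)^{k+1} · C(q,k) · |S^{p/q}_{n−k}| + |S^{p/q}_{n−(p+q)}|. -/

import Mathlib

/-- `S p q n` is the collection of finite nonempty sets `F ⊆ ℕ` with
`q * min F ≥ p * |F|` and `max F = n`. -/
def S (p q n : ℕ) : Set (Finset ℕ) :=
  {F | ∃ h : F.Nonempty, q * F.min' h ≥ p * F.card ∧ F.max' h = n}

/-- Auxiliary family: sets in `S p q n` which contain `n - i` for `1 ≤ i ≤ j`. -/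
def T (p q j n : ℕ) : Set (Finset ℕ) :=
  {F | n ∈ F ∧ (∀ x ∈ F, x ≤ n) ∧ (∀ x ∈ F, p * F.card ≤ q * x) ∧
    ∀ i ∈ Finset.Icc 1 j, n - i ∈ F}

lemma S_eq_T (p q n : ℕ) : S p q n = T p q 0 n := by
  ext F
  constructor
  · rintro ⟨h, hmin, hmax⟩
    refine ⟨hmax ▸ F.max'_mem h, fun x hx => hmax ▸ F.le_max' x hx,
      fun x hx => le_trans hmin ?_, by simp⟩
    exact Nat.mul_le_mul_left q (F.min'_le x hx)
  · rintro ⟨h1, h2, h3, _⟩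
    have hne : F.Nonempty := ⟨n, h1⟩
    exact ⟨hne, h3 _ (F.min'_mem hne), le_antisymm (F.max'_le hne n h2) (F.le_max' n h1)⟩

lemma T_finite (p q j n : ℕ) : (T p q j n).Finite := by
  apply Set.Finite.subset (Set.finite_coe_iff.mp ?_) (s := ((Finset.range (n+1)).powerset : Finset (Finset ℕ)))
  · intro F hF
    simp only [Finset.coe_powerset, Set.mem_preimage, Set.mem_powerset_iff,
      Finset.coe_range]
    intro x hx
    exact Set.mem_Iio.mpr (Nat.lt_succ_of_le (hF.2.1 x hx))
  · infer_instance

lemma step (p q j m : ℕ) (hp : 0 < p) (hj : j + 1 ≤ q) (hm : p + j + 1 ≤ m) :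
    (T p q j m).ncard = (T p q (j+1) m).ncard + (T p q j (m-1)).ncard := by
  classical
  set A : Set (Finset ℕ) := {F ∈ T p q j m | m - (j+1) ∉ F} with hA
  -- decomposition
  have hdecomp : T p q j m = T p q (j+1) m ∪ A := by
    ext F
    constructor
    · intro hF
      by_cases hc : m - (j+1) ∈ F
      · left
        refine ⟨hF.1, hF.2.1, hF.2.2.1, ?_⟩
        intro i hi
        simp only [Finset.mem_Icc] at hi
        rcases Nat.lt_or_ge i (j+1) with h | h
        · exact hF.2.2.2 i (Finset.mem_Icc.mpr ⟨hi.1, by omega⟩)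
        · have : i = j + 1 := by omega
          subst this; exact hc
      · exact Or.inr ⟨hF, hc⟩
    · rintro (hF | hF)
      · exact ⟨hF.1, hF.2.1, hF.2.2.1, fun i hi => hF.2.2.2 i
          (by simp only [Finset.mem_Icc] at hi ⊢; omega)⟩
      · exact hF.1
  have hdisj : Disjoint (T p q (j+1) m) A := by
    rw [Set.disjoint_left]
    rintro F hF ⟨_, hFn⟩
    exact hFn (hF.2.2.2 (j+1) (Finset.mem_Icc.mpr ⟨by omega, le_rfl⟩))
  -- the bijection
  set e : Finset ℕ → Finset ℕ := fun F => insert (m-1-j) (F.erase m) with he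
  have hnotmem : ∀ F ∈ A, m - 1 - j ∉ F := by
    intro F hF
    have : m - (j+1) = m - 1 - j := by omega
    exact this ▸ hF.2
  have hinv : ∀ F ∈ A, insert m ((e F).erase (m-1-j)) = F := by
    intro F hF
    rw [he]
    simp only
    rw [Finset.erase_insert (fun h => hnotmem F hF (Finset.mem_of_mem_erase h)),
      Finset.insert_erase hF.1.1]
  have hinj : Set.InjOn e A := by
    intro F1 h1 F2 h2 hee
    rw [← hinv F1 h1, ← hinv F2 h2, hee]
  have himg : e '' A = T p q j (m-1) := by
    apply Set.eq_of_subset_of_subset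
    · rintro G ⟨F, hF, rfl⟩
      obtain ⟨⟨hmF, hle, hcond, hforced⟩, hnF⟩ := hF
      have hnF' : m - 1 - j ∉ F := hnotmem F ⟨⟨hmF, hle, hcond, hforced⟩, hnF⟩
      have hcard : (e F).card = F.card := by
        rw [he]; simp only
        rw [Finset.card_insert_of_notMem (fun h => hnF' (Finset.mem_of_mem_erase h)),
          Finset.card_erase_of_mem hmF]
        have : 0 < F.card := Finset.card_pos.mpr ⟨m, hmF⟩
        omega
      have hmem : ∀ x ∈ e F, x = m - 1 - j ∨ (x ∈ F ∧ x ≠ m) := by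
        intro x hx
        rw [he] at hx
        simp only [Finset.mem_insert, Finset.mem_erase] at hx
        tauto
      refine ⟨?_, ?_, ?_, ?_⟩
      · -- m - 1 ∈ e F
        rcases Nat.eq_zero_or_pos j with hj0 | hj0
        · rw [he]; subst hj0; simp
        · have h1 : m - 1 ∈ F := hforced 1 (Finset.mem_Icc.mpr ⟨le_rfl, hj0⟩)
          rw [he]
          exact Finset.mem_insert_of_mem (Finset.mem_erase.mpr ⟨by omega, h1⟩)
      · intro x hx
        rcases hmem x hx with h | ⟨hxF, hxm⟩
        · omega
        · have := hle x hxF; omega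
      · intro x hx
        rw [hcard]
        rcases hmem x hx with h | ⟨hxF, _⟩
        · subst h
          by_cases hex : ∃ y ∈ F, y ≤ m - 1 - j
          · obtain ⟨y, hyF, hy⟩ := hex
            calc p * F.card ≤ q * y := hcond y hyF
            _ ≤ q * (m - 1 - j) := Nat.mul_le_mul_left q hy
          · push_neg at hex
            have hsub : F ⊆ Finset.Icc (m - j) m := by
              intro y hy
              have := hex y hy
              have := hle y hy
              simp only [Finset.mem_Icc]; omega
            have hcardle : F.card ≤ j + 1 := by
              have := Finset.card_le_card hsub
              rw [Nat.card_Icc] at this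
              omega
            calc p * F.card ≤ p * (j+1) := Nat.mul_le_mul_left p hcardle
            _ ≤ p * q := Nat.mul_le_mul_left p hj
            _ = q * p := Nat.mul_comm p q
            _ ≤ q * (m - 1 - j) := Nat.mul_le_mul_left q (by omega)
        · exact hcond x hxF
      · intro i hi
        simp only [Finset.mem_Icc] at hi
        rcases Nat.lt_or_ge i j with h | h
        · have h1 : m - (i+1) ∈ F := hforced (i+1) (Finset.mem_Icc.mpr ⟨by omega, by omega⟩)
          rw [he]
          apply Finset.mem_insert_of_mem (Finset.mem_erase.mpr ⟨by omega, ?_⟩)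
          have : m - 1 - i = m - (i+1) := by omega
          rw [this]; exact h1
        · have : i = j := by omega
          subst this
          rw [he]
          exact Finset.mem_insert_self _ _
    · intro G hG
      obtain ⟨hmG, hle, hcond, hforced⟩ := hG
      have hkey : m - 1 - j ∈ G := by
        rcases Nat.eq_zero_or_pos j with hj0 | hj0
        · subst hj0; simpa using hmG
        · have := hforced j (Finset.mem_Icc.mpr ⟨hj0, le_rfl⟩)
          have heq : m - 1 - j = m - 1 - j := rfl
          exact this
      refine ⟨insert m (G.erase (m-1-j)), ⟨⟨?_, ?_, ?_, ?_⟩, ?_⟩, ?_⟩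
      · exact Finset.mem_insert_self _ _
      · intro x hx
        rcases Finset.mem_insert.mp hx with h | h
        · omega
        · have := hle x (Finset.mem_of_mem_erase h); omega
      · -- condition
        have hmnotin : m ∉ G.erase (m-1-j) := fun h => by
          have := hle m (Finset.mem_of_mem_erase h); omega
        have hcard : (insert m (G.erase (m-1-j))).card = G.card := by
          rw [Finset.card_insert_of_notMem hmnotin, Finset.card_erase_of_mem hkey]
          have : 0 < G.card := Finset.card_pos.mpr ⟨m-1, hmG⟩
          omega
        intro x hx
        rw [hcard]
        rcases Finset.mem_insert.mp hx with h | h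
        · rw [h]
          calc p * G.card ≤ q * (m - 1 - j) := hcond _ hkey
          _ ≤ q * m := Nat.mul_le_mul_left q (by omega)
        · exact hcond x (Finset.mem_of_mem_erase h)
      · -- forced for F
        intro i hi
        simp only [Finset.mem_Icc] at hi
        apply Finset.mem_insert_of_mem
        have hmem : m - i ∈ G := by
          rcases Nat.eq_or_lt_of_le hi.1 with h | h
          · have : m - i = m - 1 := by omega
            rw [this]; exact hmG
          · have := hforced (i-1) (Finset.mem_Icc.mpr ⟨by omega, by omega⟩)
            have heq : m - 1 - (i - 1) = m - i := by omega
            rwa [heq] at this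
        exact Finset.mem_erase.mpr ⟨by omega, hmem⟩
      · -- m - (j+1) ∉ F
        intro hcon
        rcases Finset.mem_insert.mp hcon with h | h
        · omega
        · exact (Finset.mem_erase.mp h).1 (by omega)
      · -- e F = G
        rw [he]
        simp only
        have hmnotin : m ∉ G.erase (m-1-j) := fun h => by
          have := hle m (Finset.mem_of_mem_erase h); omega
        rw [Finset.erase_insert hmnotin, Finset.insert_erase hkey]
  -- counting
  have hAfin : A.Finite := Set.Finite.subset (T_finite p q j m) (fun F hF => hF.1)
  have hcount : A.ncard = (T p q j (m-1)).ncard := by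
    rw [← himg, Set.ncard_image_of_injOn hinj]
  rw [hdecomp, Set.ncard_union_eq hdisj (T_finite p q (j+1) m) hAfin, hcount]

lemma final (p q n : ℕ) (hp : 0 < p) (hq : 0 < q) (hn : p + q ≤ n) :
    (T p q q n).ncard = (T p q 0 (n - (p + q))).ncard := by
  classical
  set e : Finset ℕ → Finset ℕ := fun F => (F.filter (· ≤ n - q)).image (· - p) with he
  -- basic facts about members of T p q q n
  have htop : ∀ F ∈ T p q q n, ∀ x, n - q ≤ x → x ≤ n → x ∈ F := by
    rintro F ⟨hmF, _, _, hforced⟩ x h1 h2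
    rcases Nat.eq_or_lt_of_le h2 with h | h
    · rwa [h]
    · have hx : x = n - (n - x) := by omega
      rw [hx]
      exact hforced (n - x) (Finset.mem_Icc.mpr ⟨by omega, by omega⟩)
  have hcardF : ∀ F ∈ T p q q n, q + 1 ≤ F.card := by
    intro F hF
    have hsub : Finset.Icc (n - q) n ⊆ F := by
      intro x hx
      simp only [Finset.mem_Icc] at hx
      exact htop F hF x hx.1 hx.2
    have := Finset.card_le_card hsub
    rw [Nat.card_Icc] at this
    omega
  have hpx : ∀ F ∈ T p q q n, ∀ x ∈ F, p < x := by
    intro F hF x hx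
    have h1 := hF.2.2.1 x hx
    have h2 : p * (q + 1) ≤ p * F.card := Nat.mul_le_mul_left p (hcardF F hF)
    by_contra hcon
    push_neg at hcon
    have h3 : q * x ≤ q * p := Nat.mul_le_mul_left q hcon
    nlinarith
  have hfilter_neg : ∀ F ∈ T p q q n,
      F.filter (fun x => ¬ x ≤ n - q) = Finset.Icc (n - q + 1) n := by
    intro F hF
    ext x
    simp only [Finset.mem_filter, Finset.mem_Icc, not_le]
    constructor
    · intro ⟨hxF, hgt⟩
      exact ⟨by omega, hF.2.1 x hxF⟩
    · intro ⟨h1, h2⟩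
      exact ⟨htop F hF x (by omega) h2, by omega⟩
  have hcardL : ∀ F ∈ T p q q n, (F.filter (· ≤ n - q)).card + q = F.card := by
    intro F hF
    have := Finset.card_filter_add_card_filter_not (s := F) (p := (· ≤ n - q))
    rw [hfilter_neg F hF, Nat.card_Icc] at this
    omega
  have hrecover : ∀ F ∈ T p q q n,
      (e F).image (· + p) ∪ Finset.Icc (n - q + 1) n = F := by
    intro F hF
    rw [he]
    simp only [Finset.image_image]
    have h1 : (F.filter (· ≤ n - q)).image ((· + p) ∘ (· - p)) = F.filter (· ≤ n - q) := by
      rw [show ((· + p) ∘ (· - p)) = (fun x : ℕ => x - p + p) from rfl]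
      rw [Finset.image_congr (g := id) ?_, Finset.image_id]
      intro x hx
      simp only [Finset.mem_coe, Finset.mem_filter] at hx
      have := hpx F hF x hx.1
      simp only [id]
      omega
    rw [h1, ← hfilter_neg F hF, Finset.filter_union_filter_not_eq]
  have hinj : Set.InjOn e (T p q q n) := by
    intro F1 h1 F2 h2 hee
    rw [← hrecover F1 h1, ← hrecover F2 h2, hee]
  have hcard_im : ∀ F ∈ T p q q n, (e F).card + q = F.card := by
    intro F hF
    rw [he]
    simp only
    rw [Finset.card_image_of_injOn, hcardL F hF]
    intro x hx y hy hxy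
    simp only [Finset.mem_coe, Finset.mem_filter] at hx hy
    have := hpx F hF x hx.1
    have := hpx F hF y hy.1
    have hxy' : x - p = y - p := hxy
    omega
  have himg : e '' (T p q q n) = T p q 0 (n - (p + q)) := by
    apply Set.eq_of_subset_of_subset
    · rintro G ⟨F, hF, rfl⟩
      obtain ⟨hmF, hle, hcond, hforced⟩ := hF
      have hFT : F ∈ T p q q n := ⟨hmF, hle, hcond, hforced⟩
      have hmemchar : ∀ x, x ∈ e F ↔ ∃ y ∈ F, y ≤ n - q ∧ y - p = x := by
        intro x
        rw [he]
        simp only [Finset.mem_image, Finset.mem_filter]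
        constructor
        · rintro ⟨y, ⟨hy1, hy2⟩, hy3⟩; exact ⟨y, hy1, hy2, hy3⟩
        · rintro ⟨y, hy1, hy2, hy3⟩; exact ⟨y, ⟨hy1, hy2⟩, hy3⟩
      refine ⟨?_, ?_, ?_, by simp⟩
      · rw [hmemchar]
        exact ⟨n - q, htop F hFT (n - q) le_rfl (by omega), le_rfl, by omega⟩
      · intro x hx
        rw [hmemchar] at hx
        obtain ⟨y, _, hy2, hy3⟩ := hx
        have hy3' : y - p = x := hy3
        omega
      · intro x hx
        rw [hmemchar] at hx
        obtain ⟨y, hyF, hy2, hy3⟩ := hx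
        have h1 := hcond y hyF
        have h2 := hpx F hFT y hyF
        have h3 := hcard_im F hFT
        obtain ⟨z, rfl⟩ : ∃ z, y = z + p := ⟨y - p, by omega⟩
        have hy3' : z + p - p = x := hy3
        have hcard2 : p * ((e F).card + q) ≤ q * (z + p) := by rw [h3]; exact h1
        have hxz : x = z := by omega
        rw [hxz]
        nlinarith [hcard2]
    · intro G hG
      obtain ⟨hmG, hleG, hcondG, _⟩ := hG
      set F : Finset ℕ := G.image (· + p) ∪ Finset.Icc (n - q + 1) n with hFdef
      obtain ⟨d, hd⟩ : ∃ d, n = d + (p + q) := ⟨n - (p + q), by omega⟩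
      have hnd : n - (p + q) = d := by omega
      rw [hnd] at hmG hleG
      have hdisj : Disjoint (G.image (· + p)) (Finset.Icc (n - q + 1) n) := by
        rw [Finset.disjoint_left]
        intro x hx hx2
        simp only [Finset.mem_image] at hx
        obtain ⟨g, hg, rfl⟩ := hx
        have := hleG g hg
        simp only [Finset.mem_Icc] at hx2
        omega
      have hcardF' : F.card = G.card + q := by
        rw [hFdef, Finset.card_union_of_disjoint hdisj,
          Finset.card_image_of_injective _ (add_left_injective p), Nat.card_Icc]
        omega
      have hmemF : ∀ x, x ∈ F ↔ ((∃ g ∈ G, g + p = x) ∨ (n - q + 1 ≤ x ∧ x ≤ n)) := by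
        intro x
        rw [hFdef]
        simp [Finset.mem_union, Finset.mem_image, Finset.mem_Icc]
      have hFT : F ∈ T p q q n := by
        refine ⟨?_, ?_, ?_, ?_⟩
        · rw [hmemF]; right; omega
        · intro x hx
          rw [hmemF] at hx
          rcases hx with ⟨g, hg, rfl⟩ | ⟨_, h⟩
          · have := hleG g hg; omega
          · exact h
        · intro x hx
          rw [hcardF']
          rw [hmemF] at hx
          have hdG := hcondG d hmG
          rcases hx with ⟨g, hg, rfl⟩ | ⟨h1, h2⟩
          · have := hcondG g hg
            nlinarith
          · have : q * (d + p + 1) ≤ q * x := Nat.mul_le_mul_left q (by omega)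
            nlinarith
        · intro i hi
          simp only [Finset.mem_Icc] at hi
          rw [hmemF]
          rcases Nat.lt_or_ge i q with h | h
          · right; omega
          · have : i = q := by omega
            subst this
            left
            exact ⟨d, hmG, by omega⟩
      refine ⟨F, hFT, ?_⟩
      -- e F = G
      rw [he]
      simp only
      have hfilter : F.filter (· ≤ n - q) = G.image (· + p) := by
        rw [hFdef, Finset.filter_union]
        have h1 : (G.image (· + p)).filter (· ≤ n - q) = G.image (· + p) := by
          apply Finset.filter_true_of_mem
          intro x hx
          simp only [Finset.mem_image] at hx
          obtain ⟨g, hg, rfl⟩ := hx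
          have := hleG g hg
          omega
        have h2 : (Finset.Icc (n - q + 1) n).filter (· ≤ n - q) = ∅ := by
          apply Finset.filter_false_of_mem
          intro x hx
          simp only [Finset.mem_Icc] at hx
          omega
        rw [h1, h2, Finset.union_empty]
      rw [hfilter, Finset.image_image]
      rw [show ((· - p) ∘ (· + p)) = (fun x : ℕ => x + p - p) from rfl]
      rw [Finset.image_congr (g := id) ?_, Finset.image_id]
      intro x _
      simp only [id]
      omega
  rw [← himg, Set.ncard_image_of_injOn hinj]

lemma sum_formula (p q : ℕ) (hp : 0 < p) (hq : 0 < q) :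
    ∀ j m : ℕ, j ≤ q → p + j ≤ m →
    ((T p q j m).ncard : ℤ) =
      ∑ k ∈ Finset.range (j+1), (-1 : ℤ)^k * (j.choose k) * ((T p q 0 (m-k)).ncard : ℤ) := by
  intro j
  induction j with
  | zero => intro m _ _; simp
  | succ j ih =>
    intro m hj hm
    have hstep := step p q j m hp hj (by omega)
    have ihm := ih m (by omega) (by omega)
    have ihm1 := ih (m-1) (by omega) (by omega)
    have key : ((T p q (j+1) m).ncard : ℤ)
        = ((T p q j m).ncard : ℤ) - ((T p q j (m-1)).ncard : ℤ) := by
      push_cast [hstep]; ring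
    rw [key, ihm, ihm1]
    set a : ℕ → ℤ := fun i => ((T p q 0 (m - i)).ncard : ℤ) with ha
    have hsub : ∀ k, ((T p q 0 (m - 1 - k)).ncard : ℤ) = a (k+1) := by
      intro k; simp [ha, Nat.sub_sub, Nat.add_comm]
    calc ∑ k ∈ Finset.range (j+1), (-1:ℤ)^k * (j.choose k) * a k
          - ∑ k ∈ Finset.range (j+1), (-1:ℤ)^k * (j.choose k) * ((T p q 0 (m-1-k)).ncard : ℤ)
        = (∑ k ∈ Finset.range j, (-1:ℤ)^(k+1) * (j.choose (k+1)) * a (k+1) + a 0)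
          - ∑ k ∈ Finset.range (j+1), (-1:ℤ)^k * (j.choose k) * a (k+1) := by
          rw [Finset.sum_range_succ']
          simp only [hsub, Nat.choose_zero_right, Nat.cast_one, pow_zero, one_mul]
    _ = (∑ k ∈ Finset.range (j+1), (-1:ℤ)^(k+1) * (j.choose (k+1)) * a (k+1) + a 0)
          - ∑ k ∈ Finset.range (j+1), (-1:ℤ)^k * (j.choose k) * a (k+1) := by
          rw [Finset.sum_range_succ (fun k => (-1:ℤ)^(k+1) * (j.choose (k+1)) * a (k+1))]
          simp [Nat.choose_succ_self]
    _ = ∑ k ∈ Finset.range (j+1+1), (-1:ℤ)^k * ((j+1).choose k) * a k := by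
          rw [Finset.sum_range_succ' (fun k => (-1:ℤ)^k * ((j+1).choose k) * a k)]
          simp only [Nat.choose_zero_right, Nat.cast_one, pow_zero, one_mul]
          have hsplit : ∀ k ∈ Finset.range (j+1),
              (-1:ℤ)^(k+1) * (((j+1).choose (k+1) : ℕ) : ℤ) * a (k+1)
              = (-1:ℤ)^(k+1) * (j.choose (k+1)) * a (k+1)
                + (-((-1:ℤ)^k * (j.choose k) * a (k+1))) := by
            intro k _
            rw [Nat.choose_succ_succ']
            push_cast
            ring
          rw [Finset.sum_congr rfl hsplit, Finset.sum_add_distrib,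
            Finset.sum_neg_distrib]
          ring

theorem stmt_0 (p q : ℕ) (hp : 0 < p) (hq : 0 < q) (n : ℕ) (hn : n ≥ p + q) :
    ((S p q n).ncard : ℤ) =
      (∑ k ∈ Finset.Icc 1 q, (-1 : ℤ) ^ (k + 1) * (q.choose k) * ((S p q (n - k)).ncard : ℤ))
        + ((S p q (n - (p + q))).ncard : ℤ) := by
  have h1 := sum_formula p q hp hq q n le_rfl (by omega)
  rw [final p q n hp hq hn] at h1
  have h2 : Finset.range (q+1) = insert 0 (Finset.Icc 1 q) := by
    ext k; simp [Finset.mem_Icc, Finset.mem_range]; omega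
  rw [h2, Finset.sum_insert (by simp)] at h1
  simp only [pow_zero, Nat.choose_zero_right, Nat.cast_one, one_mul, Nat.sub_zero] at h1
  have h3 : ∀ k ∈ Finset.Icc 1 q, (-1 : ℤ)^(k+1) * (q.choose k) * ((S p q (n-k)).ncard : ℤ)
      = -((-1 : ℤ)^k * (q.choose k) * ((T p q 0 (n-k)).ncard : ℤ)) := by
    intro k _
    rw [S_eq_T, pow_succ]
    ring
  rw [Finset.sum_congr rfl h3, Finset.sum_neg_distrib, S_eq_T, S_eq_T]
  omega
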